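/- Let $f : E^k \to F$ be a $k$-linear symmetric map between real vector spaces. Then for all $a, x \in E$, $f(x,\dots,x) = \frac{1}{k!} \sum_{j=0}^{k} (-1)^{k-j} \binom{k}{j} f\big((a + j x)^k\big)$, where $(a+jx)^k$ denotes the $k$-tuple all of whose entries equal $a + j x$. -/

import Mathlib

open Finset


lemma sum_choose_pow_rec (k i : ℕ) :
    ∑ j ∈ range (k+2), (-1:ℝ)^j * ((k+1).choose j : ℝ) * (j:ℝ)^i
      = -∑ m ∈ range i, (i.choose m : ℝ) *
          ∑ j ∈ range (k+1), (-1:ℝ)^j * (k.choose j : ℝ) * (j:ℝ)^m := by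
  have hbin : ∀ j : ℕ, ∑ m ∈ range i, (i.choose m : ℝ) * (j:ℝ)^m
      = ((j:ℝ)+1)^i - (j:ℝ)^i := by
    intro j
    have h := add_pow (j:ℝ) 1 i
    rw [Finset.sum_range_succ] at h
    simp only [one_pow, mul_one, Nat.choose_self, Nat.cast_one] at h
    have h2 : ∑ m ∈ range i, (i.choose m : ℝ) * (j:ℝ)^m
        = ∑ m ∈ range i, (j:ℝ)^m * (i.choose m : ℝ) := by
      refine Finset.sum_congr rfl fun m _ => by ring
    rw [h2]; linarith [h]
  have hR : ∑ m ∈ range i, (i.choose m : ℝ) *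
          ∑ j ∈ range (k+1), (-1:ℝ)^j * (k.choose j : ℝ) * (j:ℝ)^m
      = ∑ j ∈ range (k+1), (-1:ℝ)^j * (k.choose j : ℝ) * (((j:ℝ)+1)^i - (j:ℝ)^i) := by
    simp only [Finset.mul_sum]
    rw [Finset.sum_comm]
    refine Finset.sum_congr rfl fun j _ => ?_
    rw [← hbin j, Finset.mul_sum]
    refine Finset.sum_congr rfl fun m _ => by ring
  have hL : ∑ j ∈ range (k+2), (-1:ℝ)^j * ((k+1).choose j : ℝ) * (j:ℝ)^i
      = ∑ j ∈ range (k+1),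
          (-1:ℝ)^(j+1) * ((k.choose j : ℝ) + (k.choose (j+1) : ℝ)) * ((j:ℝ)+1)^i
        + (0:ℝ)^i := by
    rw [Finset.sum_range_succ']
    simp only [Nat.choose_succ_succ, Nat.choose_zero_right]
    push_cast
    ring_nf
    simp [Nat.succ_eq_add_one]
    simp only [Nat.add_comm 1]
  set A : ℕ → ℝ := fun j => (-1:ℝ)^j * (k.choose j : ℝ) * (j:ℝ)^i with hA
  have htel : ∑ j ∈ range (k+1), (A (j+1) - A j) = A (k+1) - A 0 :=
    Finset.sum_range_sub A (k+1)
  have hcomb : ∑ j ∈ range (k+1),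
          (-1:ℝ)^(j+1) * ((k.choose j : ℝ) + (k.choose (j+1) : ℝ)) * ((j:ℝ)+1)^i
        + ∑ j ∈ range (k+1), (-1:ℝ)^j * (k.choose j : ℝ) * (((j:ℝ)+1)^i - (j:ℝ)^i)
      = ∑ j ∈ range (k+1), (A (j+1) - A j) := by
    rw [← Finset.sum_add_distrib]
    refine Finset.sum_congr rfl fun j _ => ?_
    simp only [hA]
    push_cast
    ring
  have hA1 : A (k+1) = 0 := by simp [hA, Nat.choose_succ_self]
  have hA0 : A 0 = (0:ℝ)^i := by simp [hA]
  rw [hL, hR]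
  linarith [hcomb, htel]

lemma sum_choose_pow (k : ℕ) : ∀ i ≤ k,
    ∑ j ∈ range (k+1), (-1:ℝ)^j * (k.choose j : ℝ) * (j:ℝ)^i
      = if i = k then (-1:ℝ)^k * k.factorial else 0 := by
  induction k with
  | zero =>
    intro i hi
    interval_cases i
    simp
  | succ k ih =>
    intro i hi
    have h := sum_choose_pow_rec k i
    rw [show k+1+1 = k+2 from rfl, h]
    rcases eq_or_lt_of_le hi with heq | hlt
    · subst heq
      rw [if_pos rfl]
      have : ∀ m ∈ range (k+1), ((k+1).choose m : ℝ) *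
          ∑ j ∈ range (k+1), (-1:ℝ)^j * (k.choose j : ℝ) * (j:ℝ)^m
          = if m = k then ((k+1).choose k : ℝ) * ((-1:ℝ)^k * k.factorial) else 0 := by
        intro m hm
        rw [ih m (Nat.lt_succ_iff.mp (mem_range.mp hm))]
        split_ifs with h'
        · subst h'; ring
        · ring
      rw [Finset.sum_congr rfl this, Finset.sum_ite_eq' (range (k+1)) k]
      rw [if_pos (mem_range.mpr (Nat.lt_succ_self k))]
      rw [Nat.choose_succ_self_right]
      push_cast [Nat.factorial_succ]
      ring
    · have hik : i ≤ k := Nat.lt_succ_iff.mp hlt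
      rw [if_neg (by omega)]
      have : ∀ m ∈ range i, ((i.choose m : ℝ)) *
          ∑ j ∈ range (k+1), (-1:ℝ)^j * (k.choose j : ℝ) * (j:ℝ)^m = 0 := by
        intro m hm
        have hm' : m < i := mem_range.mp hm
        rw [ih m (le_trans (le_of_lt hm') hik), if_neg (by omega), mul_zero]
      rw [Finset.sum_congr rfl this, Finset.sum_const_zero, neg_zero]
open Finset

/-- For a symmetric `k`-linear map `f` and vectors `a, x`:
`f(x,…,x) = (1/k!) ∑_{j=0}^{k} (-1)^{k-j} (k choose j) f((a + j·x)ᵏ)`. -/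
theorem stmt_4 {E F : Type*} [AddCommGroup E] [Module ℝ E] [AddCommGroup F] [Module ℝ F]
    (k : ℕ) (f : MultilinearMap ℝ (fun _ : Fin k => E) F)
    (hsymm : ∀ (σ : Equiv.Perm (Fin k)) (x : Fin k → E), f (x ∘ σ) = f x)
    (a x : E) :
    f (fun _ => x) = (k.factorial : ℝ)⁻¹ •
      ∑ j ∈ range (k + 1), ((-1 : ℝ) ^ (k - j) * (k.choose j : ℝ)) •
        f (fun _ => a + (j : ℝ) • x) := by
  classical
  -- value of f on a piecewise function depends only on the cardinality
  have hcard : ∀ s t : Finset (Fin k), s.card = t.card →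
      f (s.piecewise (fun _ => x) (fun _ => a))
        = f (t.piecewise (fun _ => x) (fun _ => a)) := by
    intro s t h
    have e : {l // l ∈ t} ≃ {l // l ∈ s} := Fintype.equivOfCardEq (by simp [h])
    rw [← hsymm (e.extendSubtype) (s.piecewise (fun _ => x) (fun _ => a))]
    congr 1
    funext l
    by_cases hl : l ∈ t
    · have h1 : e.extendSubtype l ∈ s := e.extendSubtype_mem l hl
      simp [Finset.piecewise, hl, h1]
    · have h1 : e.extendSubtype l ∉ s := e.extendSubtype_not_mem l hl
      simp [Finset.piecewise, hl, h1]
  -- canonical sets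
  set T : ℕ → Finset (Fin k) := fun i => univ.filter (fun l : Fin k => (l:ℕ) < i) with hT
  have hTcard : ∀ i ≤ k, (T i).card = i := by
    intro i hi
    have : T i = Finset.map (Fin.castLEEmb hi) univ := by
      ext l
      simp only [hT, mem_filter, mem_univ, true_and, Finset.mem_map, Fin.castLEEmb]
      constructor
      · intro hl; exact ⟨⟨l, hl⟩, rfl⟩
      · rintro ⟨m, rfl⟩; exact m.2
    rw [this, Finset.card_map, Finset.card_univ, Fintype.card_fin]
  set v : ℕ → F := fun i => f ((T i).piecewise (fun _ => x) (fun _ => a)) with hv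
  -- expansion of f on a + j • x
  have hexp : ∀ j : ℕ, f (fun _ => a + (j:ℝ) • x)
      = ∑ i ∈ range (k+1), ((j:ℝ)^i * (k.choose i : ℝ)) • v i := by
    intro j
    have harg : (fun _ : Fin k => a + (j:ℝ) • x)
        = (fun _ => (j:ℝ) • x) + (fun _ => a) := by
      funext l; simp [add_comm]
    rw [harg, f.map_add_univ, ← Finset.powerset_univ, Finset.sum_powerset]
    rw [Finset.card_univ, Fintype.card_fin]
    refine Finset.sum_congr rfl fun i hi => ?_
    have hik : i ≤ k := Nat.lt_succ_iff.mp (mem_range.mp hi)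
    have hterm : ∀ s ∈ powersetCard i (univ : Finset (Fin k)),
        f (s.piecewise (fun _ => (j:ℝ) • x) (fun _ => a)) = (j:ℝ)^i • v i := by
      intro s hs
      have hsc : s.card = i := (mem_powersetCard.mp hs).2
      have key := f.map_piecewise_smul (fun _ => (j:ℝ))
        (s.piecewise (fun _ => x) (fun _ => a)) s
      have harg2 : s.piecewise
          (fun l => (j:ℝ) • (s.piecewise (fun _ => x) (fun _ => a) l))
          (s.piecewise (fun _ => x) (fun _ => a))
          = s.piecewise (fun _ => (j:ℝ) • x) (fun _ => a) := by
        funext l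
        by_cases hl : l ∈ s <;> simp [Finset.piecewise, hl]
      rw [harg2] at key
      rw [key, Finset.prod_const, hsc]
      rw [hcard s (T i) (by rw [hsc, hTcard i hik])]
    rw [Finset.sum_congr rfl hterm, Finset.sum_const, Finset.card_powersetCard,
      Finset.card_univ, Fintype.card_fin, ← Nat.cast_smul_eq_nsmul ℝ, smul_smul]
    ring_nf
  -- the alternating sum over j
  have hsign : ∀ j ∈ range (k+1), ((-1:ℝ)^(k-j)) = (-1)^k * (-1)^j := by
    intro j hj
    have hjk : j ≤ k := Nat.lt_succ_iff.mp (mem_range.mp hj)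
    have h2 : ((-1:ℝ))^j * (-1)^j = 1 := by
      rw [← pow_add]; exact Even.neg_one_pow ⟨j, rfl⟩
    calc ((-1:ℝ))^(k-j) = (-1)^(k-j) * ((-1)^j * (-1)^j) := by rw [h2, mul_one]
      _ = (-1)^(k-j+j) * (-1)^j := by rw [pow_add]; ring
      _ = (-1)^k * (-1)^j := by rw [Nat.sub_add_cancel hjk]
  have hdiff : ∀ i ≤ k, ∑ j ∈ range (k+1),
      ((-1:ℝ)^(k-j) * (k.choose j : ℝ)) * (j:ℝ)^i
      = if i = k then (k.factorial : ℝ) else 0 := by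
    intro i hi
    have := sum_choose_pow k i hi
    calc ∑ j ∈ range (k+1), ((-1:ℝ)^(k-j) * (k.choose j : ℝ)) * (j:ℝ)^i
        = ∑ j ∈ range (k+1), (-1:ℝ)^k * ((-1)^j * (k.choose j : ℝ) * (j:ℝ)^i) := by
          refine Finset.sum_congr rfl fun j hj => ?_
          rw [hsign j hj]; ring
      _ = (-1:ℝ)^k * ∑ j ∈ range (k+1), (-1:ℝ)^j * (k.choose j : ℝ) * (j:ℝ)^i := by
          rw [Finset.mul_sum]
      _ = if i = k then (k.factorial : ℝ) else 0 := by
          rw [this]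
          split_ifs
          · rw [← mul_assoc, ← pow_add]
            rw [Even.neg_one_pow ⟨k, rfl⟩, one_mul]
          · rw [mul_zero]
  -- put everything together
  have hmain : ∑ j ∈ range (k + 1), ((-1 : ℝ) ^ (k - j) * (k.choose j : ℝ)) •
      f (fun _ => a + (j : ℝ) • x) = (k.factorial : ℝ) • v k := by
    calc ∑ j ∈ range (k + 1), ((-1 : ℝ) ^ (k - j) * (k.choose j : ℝ)) •
          f (fun _ => a + (j : ℝ) • x)
        = ∑ j ∈ range (k+1), ∑ i ∈ range (k+1),
            (((-1 : ℝ) ^ (k - j) * (k.choose j : ℝ)) * ((j:ℝ)^i * (k.choose i : ℝ))) • v i := by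
          refine Finset.sum_congr rfl fun j _ => ?_
          rw [hexp j, Finset.smul_sum]
          exact Finset.sum_congr rfl fun i _ => by rw [smul_smul]
      _ = ∑ i ∈ range (k+1),
            ((∑ j ∈ range (k+1), ((-1 : ℝ) ^ (k - j) * (k.choose j : ℝ)) * (j:ℝ)^i)
              * (k.choose i : ℝ)) • v i := by
          rw [Finset.sum_comm]
          refine Finset.sum_congr rfl fun i _ => ?_
          rw [Finset.sum_mul, Finset.sum_smul]
          refine Finset.sum_congr rfl fun j _ => ?_
          congr 1
          ring
      _ = ∑ i ∈ range (k+1),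
            ((if i = k then (k.factorial : ℝ) else 0) * (k.choose i : ℝ)) • v i := by
          refine Finset.sum_congr rfl fun i hi => ?_
          rw [hdiff i (Nat.lt_succ_iff.mp (mem_range.mp hi))]
      _ = (k.factorial : ℝ) • v k := by
          rw [Finset.sum_eq_single k]
          · simp
          · intro b _ hb; simp [hb]
          · intro h; exact absurd (mem_range.mpr (Nat.lt_succ_self k)) h
  rw [hmain, smul_smul, inv_mul_cancel₀ (by exact_mod_cast k.factorial_ne_zero), one_smul]
  have : T k = univ := by
    ext l; simp [hT, l.isLt]
  simp only [hv]
  rw [this, Finset.piecewise_univ]
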